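/- arXiv:2306.05269 — 3 statements merged into one kernel-verified Lean document; each statement's English description precedes it below -/
import Mathlib

section
/- Let F be a field, G a finite group, G = ⊔_{i=1}^r s_i K a coset decomposition for a subgroup K ≤ G, M a field extension of F equipped with a K-action by F-algebra automorphisms, and let L = Ind_K^G M = ⊕_{i=1}^r s_i·M with the induced G-action. Let H ≤ G. If H acts transitively on G/K by left translation, then the H-fixed subalgebra L^H is a field (every nonzero element is invertible); if H does not act transitively on G/K and char F does not divide |H|, then L^H contains a nonzero zero-divisor, hence is not a field. -/
/-- Let `M/F` be a field extension with an action `φ` of a subgroup `K ≤ G` by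
`F`-algebra automorphisms, and let `L = Ind_K^G M` be the induced `G`-algebra,
realized as the `K`-equivariant functions `f : G → M` (those with
`f(g·k) = φ(k)⁻¹(f(g))`), with pointwise operations and `G` acting by
`(σ·f)(g) = f(σ⁻¹g)`.  If `H ≤ G` acts transitively on `G/K`, then the `H`-fixed
subalgebra `L^H` is a field (every nonzero element has an inverse in `L^H`); if `H`
does not act transitively and `char F ∤ |H|`, then `L^H` contains a nonzero
zero-divisor, hence is not a field. -/
theorem induced_fixed_algebra_field_iff_transitive
    (F M : Type*) [Field F] [Field M] [Algebra F M]
    (G : Type*) [Group G] [Finite G] (K H : Subgroup G)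
    (φ : K →* (M ≃ₐ[F] M)) :
    -- `P f`: f is a point of the induced algebra `Ind_K^G M`
    let P : (G → M) → Prop := fun f => ∀ (g : G) (k : K), f (g * k) = (φ k)⁻¹ (f g)
    -- `Fix f`: f is fixed by every element of `H`
    let Fix : (G → M) → Prop := fun f => ∀ h ∈ H, ∀ g : G, f (h⁻¹ * g) = f g
    ((∀ x y : G ⧸ K, ∃ h ∈ H, h • x = y) →
        ∀ f : G → M, P f → Fix f → f ≠ 0 →
          ∃ f' : G → M, P f' ∧ Fix f' ∧ f * f' = 1) ∧
      ((¬ ∀ x y : G ⧸ K, ∃ h ∈ H, h • x = y) → (Nat.card H : F) ≠ 0 →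
        ∃ f f' : G → M,
          P f ∧ Fix f ∧ P f' ∧ Fix f' ∧ f ≠ 0 ∧ f' ≠ 0 ∧ f * f' = 0) := by
  classical
  intro P Fix
  constructor
  · -- transitive case
    intro htrans f hP hFix hf
    -- f is nowhere zero
    obtain ⟨g₀, hg₀⟩ : ∃ g₀, f g₀ ≠ 0 := by
      by_contra h
      push_neg at h
      exact hf (funext fun g => h g)
    have hne : ∀ g : G, f g ≠ 0 := by
      intro g
      obtain ⟨h, hH, hhx⟩ := htrans (QuotientGroup.mk g₀) (QuotientGroup.mk g)
      rw [MulAction.Quotient.smul_mk] at hhx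
      have hk : (h • g₀)⁻¹ * g ∈ K := (QuotientGroup.eq (s := K)).mp hhx
      have hg : g = (h * g₀) * ((h • g₀)⁻¹ * g) := by
        simp [smul_eq_mul, mul_assoc]
      have h1 : f (h * g₀) = f g₀ := by
        have := hFix h⁻¹ (H.inv_mem hH) g₀
        simpa using this
      have h2 := hP (h * g₀) ⟨_, hk⟩
      rw [h1] at h2
      have h3 : (h * g₀) * (((⟨(h • g₀)⁻¹ * g, hk⟩ : K) : G)) = g := by
        simp [smul_eq_mul, mul_assoc]
      rw [h3] at h2
      rw [h2]
      simpa using hg₀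
    refine ⟨fun g => (f g)⁻¹, ?_, ?_, ?_⟩
    · intro g k
      show (f (g * k))⁻¹ = (φ k)⁻¹ (f g)⁻¹
      rw [hP g k, map_inv₀]
    · intro h hH g
      show (f (h⁻¹ * g))⁻¹ = (f g)⁻¹
      rw [hFix h hH g]
    · funext g
      exact mul_inv_cancel₀ (hne g)
  · -- non-transitive case
    intro htrans _
    push_neg at htrans
    obtain ⟨x, y, hxy⟩ := htrans
    set f : G → M := fun g => if ∃ h ∈ H, h • x = QuotientGroup.mk g then 1 else 0 with hf
    set f' : G → M := fun g => if ∃ h ∈ H, h • y = QuotientGroup.mk g then 1 else 0 with hf'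
    have key : ∀ (z : G ⧸ K) (h : G), h ∈ H → ∀ g : G,
        (∃ h' ∈ H, h' • z = QuotientGroup.mk (h⁻¹ * g)) ↔
          (∃ h' ∈ H, h' • z = QuotientGroup.mk g) := by
      intro z h hH g
      constructor
      · rintro ⟨h', hh', hz⟩
        refine ⟨h * h', H.mul_mem hH hh', ?_⟩
        rw [mul_smul, hz, MulAction.Quotient.smul_mk]
        simp
      · rintro ⟨h', hh', hz⟩
        refine ⟨h⁻¹ * h', H.mul_mem (H.inv_mem hH) hh', ?_⟩
        rw [mul_smul, hz, MulAction.Quotient.smul_mk]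
        rfl
    have hPgen : ∀ z : G ⧸ K,
        P (fun g => if ∃ h ∈ H, h • z = QuotientGroup.mk g then (1 : M) else 0) := by
      intro z g k
      simp only [QuotientGroup.mk_mul_of_mem g k.2]
      split <;> simp
    have hFixgen : ∀ z : G ⧸ K,
        Fix (fun g => if ∃ h ∈ H, h • z = QuotientGroup.mk g then (1 : M) else 0) := by
      intro z h hH g
      simp only [key z h hH g]
    have hnezero : ∀ z : G ⧸ K,
        (fun g => if ∃ h ∈ H, h • z = QuotientGroup.mk g then (1 : M) else 0) ≠ 0 := by
      intro z hzero
      obtain ⟨g, rfl⟩ := QuotientGroup.mk_surjective z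
      have := congrFun hzero g
      rw [if_pos ⟨1, H.one_mem, one_smul _ _⟩] at this
      simp at this
    refine ⟨f, f', hPgen x, hFixgen x, hPgen y, hFixgen y, hnezero x, hnezero y, ?_⟩
    funext g
    show (if ∃ h ∈ H, h • x = QuotientGroup.mk g then (1:M) else 0) *
      (if ∃ h ∈ H, h • y = QuotientGroup.mk g then (1:M) else 0) = 0
    by_cases hx : ∃ h ∈ H, h • x = QuotientGroup.mk g
    · rw [if_pos hx, if_neg, mul_zero]
      rintro ⟨h', hh', hy⟩
      obtain ⟨h, hH, hxg⟩ := hx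
      exact hxy (h'⁻¹ * h) (H.mul_mem (H.inv_mem hh') hH)
        (by rw [mul_smul, hxg, ← hy, inv_smul_smul])
    · rw [if_neg hx, zero_mul]
end

section
/- Let e ≥ 1 and let α_1,…,α_e be e commuting elements of a commutative ring, each satisfying α_i^e = t, such that the elementary symmetric polynomials satisfy s_1(α) = ⋯ = s_{e-1}(α) = 0 and s_e(α) = ±t. Then for any nonincreasing sequence of nonnegative integers (n_1,…,n_e), the monomial symmetric polynomial m_{(n_1,…,n_e)}(α_1,…,α_e) equals 0 if e does not divide n_1+⋯+n_e, and equals c·t^{(n_1+⋯+n_e)/e} for some integer c if e divides n_1+⋯+n_e. -/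
open MvPolynomial Finset

/-- Key evaluation lemma: if the monomial symmetric sum over `F` is expressed as a
polynomial `Q` in the elementary symmetric polynomials, then its evaluation at any
tuple `β` whose elementary symmetric values are `0, …, 0, w` equals the evaluation
at `w` of a fixed one-variable integer polynomial extracted from `Q`. -/
lemma aux_eval_of_radical (e : ℕ) (F : Finset (Fin e → ℕ)) (Q : MvPolynomial (Fin e) ℤ)
    (hQP : aeval (fun j : Fin e => esymm (Fin e) ℤ ((j : ℕ) + 1)) Q
      = ∑ f ∈ F, ∏ i, X i ^ f i)
    (A : Type*) [CommRing A] (β : Fin e → A) (w : A)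
    (hβ : ∀ j : Fin e,
      (∑ S ∈ Finset.powersetCard ((j : ℕ) + 1) Finset.univ, ∏ i ∈ S, β i)
        = if (j : ℕ) + 1 = e then w else 0) :
    ∑ f ∈ F, ∏ i, β i ^ f i
      = Polynomial.aeval w
          (MvPolynomial.aeval
            (fun j : Fin e => if (j : ℕ) + 1 = e then (Polynomial.X : Polynomial ℤ) else 0) Q) := by
  have h1 : ∑ f ∈ F, ∏ i, β i ^ f i
      = aeval β (∑ f ∈ F, ∏ i, (X i : MvPolynomial (Fin e) ℤ) ^ f i) := by
    rw [map_sum]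
    exact Finset.sum_congr rfl fun f _ => by simp
  rw [h1, ← hQP, comp_aeval_apply, comp_aeval_apply]
  have hcoef : (fun j : Fin e => aeval β (esymm (Fin e) ℤ ((j : ℕ) + 1)))
      = fun j : Fin e => Polynomial.aeval w
          (if (j : ℕ) + 1 = e then (Polynomial.X : Polynomial ℤ) else 0) := by
    funext j
    simp only [esymm, map_sum, map_prod, aeval_X]
    rw [hβ j]
    split <;> simp
  rw [hcoef]

/-- Let `α_1,…,α_e` be elements of a commutative ring with `α_i^e = t`, whose
elementary symmetric polynomials satisfy `s_1 = ⋯ = s_{e-1} = 0` and `s_e = ±t`.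
Then for any nonincreasing sequence `(n_1,…,n_e)` of nonnegative integers, the
monomial symmetric polynomial `m_{(n_1,…,n_e)}(α)` vanishes if `e ∤ ∑ n_i`, and
equals `c·t^{(∑ n_i)/e}` for some integer `c` if `e ∣ ∑ n_i`. -/
theorem monomial_symmetric_of_radical (e : ℕ) (he : 1 ≤ e)
    (R : Type*) [CommRing R] (t : R) (α : Fin e → R)
    (hpow : ∀ i, α i ^ e = t)
    (hesymm : ∀ j, 1 ≤ j → j < e →
      ∑ S ∈ Finset.powersetCard j (Finset.univ : Finset (Fin e)), ∏ i ∈ S, α i = 0)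
    (htop : (∏ i, α i = t) ∨ (∏ i, α i = -t))
    (n : Fin e → ℕ) (hn : Antitone n) :
    (¬ e ∣ ∑ i, n i →
        ∑ f ∈ Finset.image (fun σ : Equiv.Perm (Fin e) => n ∘ σ) Finset.univ,
          ∏ i, α i ^ f i = 0) ∧
      (e ∣ ∑ i, n i →
        ∃ c : ℤ,
          ∑ f ∈ Finset.image (fun σ : Equiv.Perm (Fin e) => n ∘ σ) Finset.univ,
            ∏ i, α i ^ f i = c • t ^ ((∑ i, n i) / e)) := by
  classical
  set F : Finset (Fin e → ℕ) :=
    Finset.image (fun σ : Equiv.Perm (Fin e) => n ∘ σ) Finset.univ with hF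
  set D : ℕ := ∑ i, n i with hD
  have hsumF : ∀ f ∈ F, ∑ i, f i = D := by
    intro f hf
    rw [hF, Finset.mem_image] at hf
    obtain ⟨σ, -, rfl⟩ := hf
    exact Equiv.sum_comp σ n
  -- the monomial symmetric polynomial over ℤ
  have hPsymm : (∑ f ∈ F, ∏ i, (X i : MvPolynomial (Fin e) ℤ) ^ f i).IsSymmetric := by
    intro τ
    rw [map_sum]
    refine Finset.sum_nbij' (fun f => f ∘ ⇑τ⁻¹) (fun f => f ∘ ⇑τ) ?_ ?_ ?_ ?_ ?_
    · intro f hf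
      rw [hF, Finset.mem_image] at hf ⊢
      obtain ⟨σ, -, rfl⟩ := hf
      exact ⟨τ⁻¹.trans σ, Finset.mem_univ _, rfl⟩
    · intro f hf
      rw [hF, Finset.mem_image] at hf ⊢
      obtain ⟨σ, -, rfl⟩ := hf
      exact ⟨τ.trans σ, Finset.mem_univ _, rfl⟩
    · intro f _; funext i; simp
    · intro f _; funext i; simp
    · intro f _
      rw [map_prod]
      simp only [map_pow, rename_X]
      exact Fintype.prod_equiv τ _ _ (fun i => by simp)
  obtain ⟨Q, hQ⟩ := esymmAlgHom_fin_surjective (R := ℤ) (n := e) (le_refl e)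
    ⟨∑ f ∈ F, ∏ i, (X i : MvPolynomial (Fin e) ℤ) ^ f i, hPsymm⟩
  have hQP : aeval (fun j : Fin e => esymm (Fin e) ℤ ((j : ℕ) + 1)) Q
      = ∑ f ∈ F, ∏ i, (X i : MvPolynomial (Fin e) ℤ) ^ f i := by
    have h := congrArg Subtype.val hQ
    rwa [esymmAlgHom_apply] at h
  set q : Polynomial ℤ :=
    MvPolynomial.aeval
      (fun j : Fin e => if (j : ℕ) + 1 = e then (Polynomial.X : Polynomial ℤ) else 0) Q with hq
  set u : R := ∏ i, α i with hu
  -- evaluation at α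
  have hval : ∀ j : Fin e,
      (∑ S ∈ Finset.powersetCard ((j : ℕ) + 1) Finset.univ, ∏ i ∈ S, α i)
        = if (j : ℕ) + 1 = e then u else 0 := by
    intro j
    by_cases hj : (j : ℕ) + 1 = e
    · rw [if_pos hj, hj]
      have hps : Finset.powersetCard e (Finset.univ : Finset (Fin e)) = {Finset.univ} := by
        have h := Finset.powersetCard_self (Finset.univ : Finset (Fin e))
        simpa using h
      rw [hps, Finset.sum_singleton]
    · rw [if_neg hj]
      exact hesymm _ (Nat.le_add_left 1 _) (lt_of_le_of_ne j.isLt hj)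
  have hS : (∑ f ∈ F, ∏ i, α i ^ f i) = Polynomial.aeval u q :=
    aux_eval_of_radical e F Q hQP R α u hval
  -- evaluation at β i = C (α i) * X in R[X]
  have hvalP : ∀ j : Fin e,
      (∑ S ∈ Finset.powersetCard ((j : ℕ) + 1) Finset.univ,
        ∏ i ∈ S, (Polynomial.C (α i) * Polynomial.X))
        = if (j : ℕ) + 1 = e then Polynomial.C u * Polynomial.X ^ e else 0 := by
    intro j
    have hfac : ∀ S ∈ Finset.powersetCard ((j : ℕ) + 1) (Finset.univ : Finset (Fin e)),
        ∏ i ∈ S, (Polynomial.C (α i) * Polynomial.X)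
          = Polynomial.C (∏ i ∈ S, α i) * Polynomial.X ^ ((j : ℕ) + 1) := by
      intro S hSmem
      rw [Finset.prod_mul_distrib, Finset.prod_const, map_prod,
        (Finset.mem_powersetCard.mp hSmem).2]
    rw [Finset.sum_congr rfl hfac, ← Finset.sum_mul, ← map_sum, hval j]
    split
    · next h => rw [h]
    · simp
  have hSP : (∑ f ∈ F, ∏ i, (Polynomial.C (α i) * Polynomial.X) ^ f i)
      = Polynomial.aeval (Polynomial.C u * Polynomial.X ^ e) q :=
    aux_eval_of_radical e F Q hQP (Polynomial R) _ _ hvalP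
  have hLHS : (∑ f ∈ F, ∏ i, (Polynomial.C (α i) * Polynomial.X) ^ f i)
      = Polynomial.C (∑ f ∈ F, ∏ i, α i ^ f i) * Polynomial.X ^ D := by
    rw [map_sum, Finset.sum_mul]
    refine Finset.sum_congr rfl fun f hf => ?_
    calc ∏ i, (Polynomial.C (α i) * Polynomial.X) ^ f i
        = ∏ i, (Polynomial.C (α i ^ f i) * Polynomial.X ^ f i) := by
          simp [mul_pow, map_pow]
      _ = Polynomial.C (∏ i, α i ^ f i) * Polynomial.X ^ (∑ i, f i) := by
          rw [Finset.prod_mul_distrib, map_prod, Finset.prod_pow_eq_pow_sum]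
      _ = Polynomial.C (∏ i, α i ^ f i) * Polynomial.X ^ D := by rw [hsumF f hf]
  have main : Polynomial.C (∑ f ∈ F, ∏ i, α i ^ f i) * Polynomial.X ^ D
      = Polynomial.aeval (Polynomial.C u * Polynomial.X ^ e) q := by
    rw [← hLHS, hSP]
  have hcoeff : (∑ f ∈ F, ∏ i, α i ^ f i)
      = ∑ k ∈ Finset.range (q.natDegree + 1),
          q.coeff k • (if D = e * k then u ^ k else 0) := by
    have h1 := congrArg (fun p : Polynomial R => p.coeff D) main
    rw [Polynomial.coeff_C_mul, Polynomial.coeff_X_pow, if_pos rfl, mul_one,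
      Polynomial.aeval_eq_sum_range, Polynomial.finset_sum_coeff] at h1
    rw [h1]
    refine Finset.sum_congr rfl fun k _ => ?_
    rw [mul_pow, ← Polynomial.C_pow, ← pow_mul, Polynomial.coeff_smul,
      Polynomial.coeff_C_mul, Polynomial.coeff_X_pow]
    split <;> simp
  constructor
  · intro hdvd
    rw [hcoeff]
    refine Finset.sum_eq_zero fun k _ => ?_
    rw [if_neg (fun h => hdvd ⟨k, h⟩), smul_zero]
  · intro hdvd
    obtain ⟨m, hm⟩ := hdvd
    have hDe : D / e = m := by rw [hm]; exact Nat.mul_div_cancel_left m (by omega)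
    have hsum : (∑ f ∈ F, ∏ i, α i ^ f i)
        = (if m ∈ Finset.range (q.natDegree + 1) then q.coeff m else 0) • u ^ m := by
      rw [hcoeff]
      have hterm : ∀ k ∈ Finset.range (q.natDegree + 1),
          q.coeff k • (if D = e * k then u ^ k else 0)
            = if k = m then q.coeff k • u ^ k else 0 := by
        intro k _
        by_cases hkm : k = m
        · subst hkm; rw [if_pos rfl, if_pos hm]
        · rw [if_neg hkm, if_neg, smul_zero]
          intro h
          exact hkm (Nat.eq_of_mul_eq_mul_left (by omega) (h.symm.trans hm))
      rw [Finset.sum_congr rfl hterm,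
        Finset.sum_ite_eq' (Finset.range (q.natDegree + 1)) m (fun k => q.coeff k • u ^ k)]
      split <;> simp
    rcases htop with h | h
    · exact ⟨_, by rw [hDe, hsum, h]⟩
    · refine ⟨(-1) ^ m * (if m ∈ Finset.range (q.natDegree + 1) then q.coeff m else 0), ?_⟩
      rw [hDe, hsum, h, neg_pow, zsmul_eq_mul, zsmul_eq_mul]
      push_cast
      ring
end

section
/- Let n ≥ 2 and let L be a field extension of k(t) of degree n with a k(t)-basis 1, α_1, …, α_{n-1}. Form the (n-2)×(n-2) matrix M whose (i,j) entry is the coefficient of α_{n-1} when α_i·α_j is written in this basis. Then det M ≠ 0. -/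
set_option synthInstance.maxHeartbeats 1000000 in
/-- Let `L` be a degree-`n` field extension of `k(t)` with basis `1, α_1, …, α_{n-1}`.
The `(n-2)×(n-2)` matrix `M` whose `(i,j)` entry is the coefficient of `α_{n-1}` in
`α_i·α_j` has nonzero determinant. -/
theorem det_coefficient_matrix_ne_zero
    (k : Type*) [Field k] (L : Type*) [Field L] [Algebra (RatFunc k) L]
    (n : ℕ) (hn : 2 ≤ n) (b : Module.Basis (Fin n) (RatFunc k) L)
    (hb : b ⟨0, by omega⟩ = 1) :
    (Matrix.of fun i j : Fin (n - 2) =>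
        b.repr (b ⟨i.1 + 1, by have := i.isLt; omega⟩ *
          b ⟨j.1 + 1, by have := j.isLt; omega⟩) ⟨n - 1, by omega⟩).det ≠ 0 := by
  intro hdet
  obtain ⟨c, hc, hcM⟩ := Matrix.exists_vecMul_eq_zero_iff.mpr hdet
  have hlt : ∀ i : Fin (n - 2), i.1 + 1 < n := fun i => by have := i.isLt; omega
  have hn1 : n - 1 < n := by omega
  set nn : Fin n := ⟨n - 1, hn1⟩ with hnn
  set φ : L →ₗ[RatFunc k] RatFunc k := (Finsupp.lapply nn) ∘ₗ b.repr.toLinearMap with hφ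
  have hφb : ∀ j : Fin n, φ (b j) = if j = nn then 1 else 0 := by
    intro j
    simp [hφ, Finsupp.single_apply]
  set β : L := ∑ i : Fin (n - 2), c i • b ⟨i.1 + 1, hlt i⟩ with hβ
  -- expansion of φ (β * b j)
  have hexp : ∀ j : Fin n, φ (β * b j) = ∑ i : Fin (n - 2), c i * φ (b ⟨i.1 + 1, hlt i⟩ * b j) := by
    intro j
    rw [hβ, Finset.sum_mul]
    simp [smul_mul_assoc]
  have hkey : ∀ j : Fin n, j ≠ nn → φ (β * b j) = 0 := by
    intro j hj
    rcases Nat.eq_zero_or_pos j.1 with h0 | hpos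
    · have hj0 : j = ⟨0, by omega⟩ := Fin.ext h0
      rw [hexp, hj0, hb]
      refine Finset.sum_eq_zero fun i _ => ?_
      rw [mul_one, hφb]
      have : (⟨i.1 + 1, hlt i⟩ : Fin n) ≠ nn :=
        Fin.ne_of_val_ne (by simp [hnn]; have := i.isLt; omega)
      simp [this]
    · have hjne : j.1 ≠ n - 1 := fun h => hj (Fin.ext (by simp [hnn, h]))
      have hjlt : j.1 - 1 < n - 2 := by have := j.isLt; omega
      set j' : Fin (n - 2) := ⟨j.1 - 1, hjlt⟩ with hj'
      have hjeq : j = ⟨j'.1 + 1, hlt j'⟩ := Fin.ext (by simp [hj']; omega)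
      have := congrFun hcM j'
      rw [hexp, hjeq]
      simpa [Matrix.vecMul, dotProduct, hφ] using this
  set μ : RatFunc k := φ (β * b nn) with hμ
  have hstar : ∀ x : L, φ (β * x) = μ * φ x := by
    intro x
    have heq : (φ ∘ₗ LinearMap.mulLeft (RatFunc k) β) = μ • φ := by
      apply b.ext
      intro j
      by_cases hj : j = nn
      · subst hj
        simp [hφb, hμ]
      · simp [hkey j hj, hφb, hj]
    simpa using congrArg (fun f => f x) heq
  -- β is not in (RatFunc k)·1
  obtain ⟨i0, hi0'⟩ := Function.ne_iff.mp hc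
  have hi0 : c i0 ≠ 0 := by simpa using hi0'
  have hreprβ : b.repr β ⟨i0.1 + 1, hlt i0⟩ = c i0 := by
    rw [hβ]
    simp only [map_sum, map_smul]
    rw [Finsupp.coe_finset_sum, Finset.sum_apply]
    rw [Finset.sum_eq_single i0]
    · simp [Finsupp.single_apply]
    · intro i _ hi
      have : (⟨i.1 + 1, hlt i⟩ : Fin n) ≠ ⟨i0.1 + 1, hlt i0⟩ := by
        intro h
        rw [Fin.mk.injEq] at h
        exact hi (Fin.ext (by omega))
      simp [Finsupp.single_apply, this]
    · simp
  set γ : L := β - algebraMap (RatFunc k) L μ with hγ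
  have hγne : γ ≠ 0 := by
    intro h
    have hβμ : β = algebraMap (RatFunc k) L μ := by
      rw [← sub_eq_zero]; exact h
    have h1 : algebraMap (RatFunc k) L μ = μ • b ⟨0, by omega⟩ := by
      rw [hb, Algebra.algebraMap_eq_smul_one]
    have h2 : b.repr β ⟨i0.1 + 1, hlt i0⟩ = 0 := by
      rw [hβμ, h1, map_smul]
      have : (⟨0, by omega⟩ : Fin n) ≠ ⟨i0.1 + 1, hlt i0⟩ :=
        Fin.ne_of_val_ne (by simp)
      simp [Finsupp.single_apply, this]
    rw [hreprβ] at h2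
    exact hi0 h2
  have hγx : ∀ x : L, φ (γ * x) = 0 := by
    intro x
    rw [hγ, sub_mul, map_sub, hstar]
    rw [Algebra.algebraMap_eq_smul_one, smul_mul_assoc, one_mul, map_smul]
    simp [smul_eq_mul]
  have hcontra := hγx (γ⁻¹ * b nn)
  rw [← mul_assoc, mul_inv_cancel₀ hγne, one_mul, hφb] at hcontra
  simp at hcontra
end
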